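/- Let g be the unique continuous fixed point of g(L_n(x)) = α_n g(x) + q_n(x), n = 1,…,N−1, where 0 ≤ α_n < 1 and each q_n satisfies q_n(x) ≥ c(1 − α_n) for all x ∈ [x_1,x_N]. If additionally g(x_1) ≥ c and g(x_N) ≥ c, then g(x) ≥ c for all x ∈ [x_1,x_N]. -/
import Mathlib

/-- Every point of the big interval lies in some subinterval `[x n, x (n+1)]`. -/
lemma fif_cover (N : ℕ) (hN : 2 ≤ N) (x : ℕ → ℝ)
    (t : ℝ) (ht : t ∈ Set.Icc (x 0) (x (N-1))) :
    ∃ n ≤ N - 2, x n ≤ t ∧ t ≤ x (n+1) := by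
  classical
  set n := Nat.findGreatest (fun k => x k ≤ t) (N-2) with hn
  have hP0 : x 0 ≤ t := ht.1
  have hnle : n ≤ N - 2 := Nat.findGreatest_le _
  have hPn : x n ≤ t := by
    have := Nat.findGreatest_spec (P := fun k => x k ≤ t) (Nat.zero_le (N-2)) hP0
    rwa [← hn] at this
  refine ⟨n, hnle, hPn, ?_⟩
  rcases eq_or_lt_of_le hnle with h | h
  · have : n + 1 = N - 1 := by omega
    rw [this]; exact ht.2
  · have hnot : ¬ (x (n+1) ≤ t) :=
      Nat.findGreatest_is_greatest (Nat.lt_succ_self n) (by omega)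
    linarith [not_le.mp hnot]

/-- Invariance principle: the fractal interpolation function stays above `c`. -/
theorem fif_above_constant (N : ℕ) (hN : 2 ≤ N) (x : ℕ → ℝ)
    (hx : ∀ i j, i < j → j ≤ N - 1 → x i < x j)
    (L : ℕ → ℝ → ℝ)
    (hL : ∀ n t, L n t = (x (n+1) - x n) / (x (N-1) - x 0) * (t - x 0) + x n)
    (α : ℕ → ℝ) (hα0 : ∀ n, n ≤ N - 2 → 0 ≤ α n) (hα1 : ∀ n, n ≤ N - 2 → α n < 1)
    (q : ℕ → ℝ → ℝ) (c : ℝ)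
    (hq : ∀ n, n ≤ N - 2 → ∀ t ∈ Set.Icc (x 0) (x (N-1)), c * (1 - α n) ≤ q n t)
    (g : ℝ → ℝ) (hgc : ContinuousOn g (Set.Icc (x 0) (x (N-1))))
    (hgfix : ∀ n, n ≤ N - 2 → ∀ t ∈ Set.Icc (x 0) (x (N-1)),
      g (L n t) = α n * g t + q n t)
    (hg0 : c ≤ g (x 0)) (hgN : c ≤ g (x (N-1))) :
    ∀ t ∈ Set.Icc (x 0) (x (N-1)), c ≤ g t := by
  have hD : (0:ℝ) < x (N-1) - x 0 := by
    have := hx 0 (N-1) (by omega) (le_refl _)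
    linarith
  -- min is attained
  have hne : (Set.Icc (x 0) (x (N-1))).Nonempty := ⟨x 0, le_refl _, le_of_lt (by linarith)⟩
  obtain ⟨t₀, ht₀mem, ht₀min⟩ := isCompact_Icc.exists_isMinOn hne hgc
  -- t₀ lies in the image of some L n
  obtain ⟨n, hn, h1, h2⟩ := fif_cover N hN x t₀ ht₀mem
  have hd : (0:ℝ) < x (n+1) - x n := by
    have := hx n (n+1) (Nat.lt_succ_self n) (by omega)
    linarith
  set s := (t₀ - x n) * (x (N-1) - x 0) / (x (n+1) - x n) + x 0 with hs
  have hsmem : s ∈ Set.Icc (x 0) (x (N-1)) := by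
    constructor
    · have : 0 ≤ (t₀ - x n) * (x (N-1) - x 0) / (x (n+1) - x n) := by
        apply div_nonneg (mul_nonneg (by linarith) (le_of_lt hD)) (le_of_lt hd)
      rw [hs]; linarith
    · rw [hs]
      have : (t₀ - x n) * (x (N-1) - x 0) / (x (n+1) - x n) ≤ x (N-1) - x 0 := by
        rw [div_le_iff₀ hd]
        nlinarith
      linarith
  have hLs : L n s = t₀ := by
    rw [hL, hs]
    field_simp
    ring
  have hfix := hgfix n hn s hsmem
  rw [hLs] at hfix
  have hmin : g t₀ ≤ g s := ht₀min hsmem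
  have hqs := hq n hn s hsmem
  have hα1' := hα1 n hn
  have hα0' := hα0 n hn
  have hct₀ : c ≤ g t₀ := by nlinarith
  intro t ht
  exact le_trans hct₀ (ht₀min ht)
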